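/- Define f : ℕ → ℕ by f(1) = 1 and f(n) = C(n, ⌊n/2⌋)·(f(⌊n/2⌋) + f(⌈n/2⌉)) for n > 1. If n = 2^m is a power of 2 with m ≥ 0, then f(2^m) = 2^m · (2^m)! / ((2^{m−1})! · (2^{m−2})! · ⋯ · 2! · 1!). -/

import Mathlib

def f : ℕ → ℕ
  | 0 => 1
  | 1 => 1
  | n + 2 => Nat.choose (n + 2) ((n + 2) / 2) * (f ((n + 2) / 2) + f ((n + 2 + 1) / 2))
decreasing_by all_goals omega

lemma f_two_mul (k : ℕ) : f (2 * (k + 1)) = Nat.choose (2 * (k + 1)) (k + 1) * (2 * f (k + 1)) := by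
  have h1 : 2 * (k + 1) = 2 * k + 2 := by ring
  rw [h1, f]
  have h2 : (2 * k + 2) / 2 = k + 1 := by omega
  have h3 : (2 * k + 2 + 1) / 2 = k + 1 := by omega
  rw [h2, h3]
  ring

theorem stmt_9 (m : ℕ) :
    f (2 ^ m) * (∏ j ∈ Finset.range m, Nat.factorial (2 ^ j)) =
      2 ^ m * Nat.factorial (2 ^ m) := by
  induction m with
  | zero => simp [f]
  | succ m ih =>
    obtain ⟨k, hk⟩ : ∃ k, 2 ^ m = k + 1 := ⟨2 ^ m - 1, by have := Nat.one_le_two_pow (n := m); omega⟩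
    have hpow : 2 ^ (m + 1) = 2 * (k + 1) := by rw [pow_succ, hk]; ring
    have hch : Nat.choose (2 * (k + 1)) (k + 1) * (k + 1).factorial * (k + 1).factorial
        = (2 * (k + 1)).factorial := by
      have := Nat.choose_mul_factorial_mul_factorial (show k + 1 ≤ 2 * (k + 1) by omega)
      simpa [show 2 * (k + 1) - (k + 1) = k + 1 by omega] using this
    rw [Finset.prod_range_succ, hpow, f_two_mul, hk]
    rw [hk] at ih
    calc Nat.choose (2 * (k + 1)) (k + 1) * (2 * f (k + 1)) *
          ((∏ j ∈ Finset.range m, Nat.factorial (2 ^ j)) * (k + 1).factorial)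
        = 2 * (f (k + 1) * ∏ j ∈ Finset.range m, Nat.factorial (2 ^ j)) *
          (Nat.choose (2 * (k + 1)) (k + 1) * (k + 1).factorial) := by ring
      _ = 2 * ((k + 1) * (k + 1).factorial) *
          (Nat.choose (2 * (k + 1)) (k + 1) * (k + 1).factorial) := by rw [ih]
      _ = 2 * (k + 1) *
          (Nat.choose (2 * (k + 1)) (k + 1) * (k + 1).factorial * (k + 1).factorial) := by ring
      _ = 2 * (k + 1) * (2 * (k + 1)).factorial := by rw [hch]
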